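/- Let p ≥ 1/2 be a real number, let A, μ₁ > 0 and α, γ ≥ 0 be constants, let σ₁, σ₂ ∈ ℝ, let Z be a measurable space with a finite measure ν, and let η₁, η₂ : Z → ℝ be bounded measurable functions with η₁(u) > −1 and η₂(u) > −1 for all u ∈ Z. Define χ = μ₁ − ((2p−1)/2)·max(σ₁², σ₂²) − (1/(2p))·∫_Z ( (1 + max(η₁(u),η₂(u)))^{2p} − 1 − 2p·min(η₁(u),η₂(u)) ) ν(du). Then for all S, I > 0: 2p·(S+I)^{2p−1}·( A − μ₁ S − (μ₁+α+γ) I ) + p(2p−1)·(S+I)^{2p−2}·( σ₁² S² + σ₂² I² ) + ∫_Z [ ((1+η₁(u))S + (1+η₂(u))I)^{2p} − (S+I)^{2p} − 2p·(S+I)^{2p−1}·(η₁(u)S + η₂(u)I) ] ν(du) ≤ 2p·(S+I)^{2p−2}·( A·(S+I) − χ·(S+I)² ). -/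
import Mathlib


open MeasureTheory Real

/-- Core drift estimate of Lemma 3.3: the generator of the stochastic SIR model
with Lévy jumps applied to `(S,I) ↦ (S+I)^{2p}` is bounded by
`2p (S+I)^{2p−2} (A(S+I) − χ (S+I)²)`. -/
theorem stmt9 (p A μ₁ α γ σ₁ σ₂ : ℝ) (hp : 1 / 2 ≤ p) (hA : 0 < A) (hμ₁ : 0 < μ₁)
    (hα : 0 ≤ α) (hγ : 0 ≤ γ)
    {Z : Type*} [MeasurableSpace Z] (ν : Measure Z) [IsFiniteMeasure ν]
    (η₁ η₂ : Z → ℝ) (h1m : Measurable η₁) (h2m : Measurable η₂)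
    (h1b : ∃ B : ℝ, ∀ u : Z, |η₁ u| ≤ B) (h2b : ∃ B : ℝ, ∀ u : Z, |η₂ u| ≤ B)
    (h1 : ∀ u : Z, -1 < η₁ u) (h2 : ∀ u : Z, -1 < η₂ u)
    (χ : ℝ)
    (hχ : χ = μ₁ - ((2 * p - 1) / 2) * max (σ₁ ^ 2) (σ₂ ^ 2)
        - (1 / (2 * p)) * ∫ u, ((1 + max (η₁ u) (η₂ u)) ^ (2 * p) - 1
            - 2 * p * min (η₁ u) (η₂ u)) ∂ν) :
    ∀ S I : ℝ, 0 < S → 0 < I →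
      2 * p * (S + I) ^ (2 * p - 1) * (A - μ₁ * S - (μ₁ + α + γ) * I)
          + p * (2 * p - 1) * (S + I) ^ (2 * p - 2) * (σ₁ ^ 2 * S ^ 2 + σ₂ ^ 2 * I ^ 2)
          + ∫ u, (((1 + η₁ u) * S + (1 + η₂ u) * I) ^ (2 * p) - (S + I) ^ (2 * p)
              - 2 * p * (S + I) ^ (2 * p - 1) * (η₁ u * S + η₂ u * I)) ∂ν
        ≤ 2 * p * (S + I) ^ (2 * p - 2) * (A * (S + I) - χ * (S + I) ^ 2) := by
  obtain ⟨B₁', hB₁'⟩ := h1b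
  obtain ⟨B₂', hB₂'⟩ := h2b
  set B₁ : ℝ := max B₁' 0 with hB₁def
  set B₂ : ℝ := max B₂' 0 with hB₂def
  have hB₁ : ∀ u, |η₁ u| ≤ B₁ := fun u => (hB₁' u).trans (le_max_left _ _)
  have hB₂ : ∀ u, |η₂ u| ≤ B₂ := fun u => (hB₂' u).trans (le_max_left _ _)
  have hB₁0 : 0 ≤ B₁ := le_max_right _ _
  have hB₂0 : 0 ≤ B₂ := le_max_right _ _
  clear_value B₁ B₂
  have hp0 : 0 < p := lt_of_lt_of_le (by norm_num) hp
  have h2p1 : (0:ℝ) ≤ 2 * p - 1 := by linarith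
  intro S I hS hI
  set N : ℝ := S + I with hNdef
  have hN : 0 < N := by rw [hNdef]; positivity
  set K : ℝ := max (σ₁ ^ 2) (σ₂ ^ 2) with hKdef
  have hK0 : 0 ≤ K := le_trans (sq_nonneg σ₁) (le_max_left _ _)
  set g : Z → ℝ := fun u => (1 + max (η₁ u) (η₂ u)) ^ (2 * p) - 1
      - 2 * p * min (η₁ u) (η₂ u) with hgdef
  set f : Z → ℝ := fun u => ((1 + η₁ u) * S + (1 + η₂ u) * I) ^ (2 * p) - N ^ (2 * p)
      - 2 * p * N ^ (2 * p - 1) * (η₁ u * S + η₂ u * I) with hfdef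
  set J : ℝ := ∫ u, g u ∂ν with hJdef
  clear_value N K g f J
  have hbase : ∀ u, 0 < (1 + η₁ u) * S + (1 + η₂ u) * I := fun u =>
    add_pos (mul_pos (by linarith [h1 u]) hS) (mul_pos (by linarith [h2 u]) hI)
  have hMpos : ∀ u, 0 < 1 + max (η₁ u) (η₂ u) := by
    intro u
    have := h1 u; have := le_max_left (η₁ u) (η₂ u)
    linarith
  -- rpow algebra
  have e1 : N ^ (2 * p - 1) * N = N ^ (2 * p) := by
    have h := (Real.rpow_add hN (2 * p - 1) 1).symm
    rw [Real.rpow_one] at h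
    rw [h]
    congr 1
    ring
  have e1' : N ^ (2 * p - 1) = N ^ (2 * p - 2) * N := by
    have h := Real.rpow_add hN (2 * p - 2) 1
    rw [Real.rpow_one] at h
    rw [← h]
    congr 1
    ring
  have e2 : N ^ (2 * p) = N ^ (2 * p - 2) * N ^ 2 := by
    have h := Real.rpow_add hN (2 * p - 2) 2
    rw [Real.rpow_two] at h
    rw [← h]
    congr 1
    ring
  -- measurability
  have hfm : Measurable f := by rw [hfdef]; fun_prop
  have hgm : Measurable g := by rw [hgdef]; fun_prop
  -- integrability
  have hfi : Integrable f ν := by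
    refine Integrable.mono' (integrable_const
      (((1 + B₁) * S + (1 + B₂) * I) ^ (2 * p) + N ^ (2 * p)
        + 2 * p * N ^ (2 * p - 1) * (B₁ * S + B₂ * I)))
      hfm.aestronglyMeasurable (Filter.Eventually.of_forall ?_)
    intro u
    have ha1 := abs_le.mp (hB₁ u)
    have ha2 := abs_le.mp (hB₂ u)
    have ht0 : 0 < ((1 + η₁ u) * S + (1 + η₂ u) * I) ^ (2 * p) :=
      Real.rpow_pos_of_pos (hbase u) _
    have htT : ((1 + η₁ u) * S + (1 + η₂ u) * I) ^ (2 * p)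
        ≤ ((1 + B₁) * S + (1 + B₂) * I) ^ (2 * p) := by
      apply Real.rpow_le_rpow (hbase u).le _ (by linarith)
      exact add_le_add (mul_le_mul_of_nonneg_right (by linarith [ha1.2]) hS.le)
        (mul_le_mul_of_nonneg_right (by linarith [ha2.2]) hI.le)
    have hc : (0:ℝ) ≤ 2 * p * N ^ (2 * p - 1) := by positivity
    have hx : |η₁ u * S + η₂ u * I| ≤ B₁ * S + B₂ * I := by
      calc |η₁ u * S + η₂ u * I| ≤ |η₁ u * S| + |η₂ u * I| := abs_add_le _ _
        _ ≤ B₁ * S + B₂ * I := by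
            rw [abs_mul, abs_mul, abs_of_pos hS, abs_of_pos hI]
            exact add_le_add (mul_le_mul_of_nonneg_right (hB₁ u) hS.le)
              (mul_le_mul_of_nonneg_right (hB₂ u) hI.le)
    have hcx : |2 * p * N ^ (2 * p - 1) * (η₁ u * S + η₂ u * I)|
        ≤ 2 * p * N ^ (2 * p - 1) * (B₁ * S + B₂ * I) := by
      rw [abs_mul, abs_of_nonneg hc]
      exact mul_le_mul_of_nonneg_left hx hc
    obtain ⟨hcx1, hcx2⟩ := abs_le.mp hcx
    have hN2p : 0 < N ^ (2 * p) := Real.rpow_pos_of_pos hN _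
    rw [Real.norm_eq_abs, hfdef, abs_le]
    constructor <;> simp only [] <;> linarith
  have hgi : Integrable g ν := by
    refine Integrable.mono' (integrable_const
      ((1 + max B₁ B₂) ^ (2 * p) + 1 + 2 * p * max B₁ B₂))
      hgm.aestronglyMeasurable (Filter.Eventually.of_forall ?_)
    intro u
    have ha1 := abs_le.mp (hB₁ u)
    have ha2 := abs_le.mp (hB₂ u)
    have hBmax : 0 ≤ max B₁ B₂ := le_trans hB₁0 (le_max_left _ _)
    have ht0 : 0 < (1 + max (η₁ u) (η₂ u)) ^ (2 * p) :=
      Real.rpow_pos_of_pos (hMpos u) _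
    have hMB : max (η₁ u) (η₂ u) ≤ max B₁ B₂ := max_le_max ha1.2 ha2.2
    have htT : (1 + max (η₁ u) (η₂ u)) ^ (2 * p) ≤ (1 + max B₁ B₂) ^ (2 * p) :=
      Real.rpow_le_rpow (hMpos u).le (by linarith) (by linarith)
    have hm1 : -(max B₁ B₂) ≤ min (η₁ u) (η₂ u) := by
      have hb1 := le_max_left B₁ B₂
      have hb2 := le_max_right B₁ B₂
      exact le_min (by linarith [ha1.1]) (by linarith [ha2.1])
    have hm2 : min (η₁ u) (η₂ u) ≤ max B₁ B₂ :=
      (min_le_left _ _).trans (ha1.2.trans (le_max_left _ _))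
    have hc : (0:ℝ) ≤ 2 * p := by linarith
    have hcm1 : 2 * p * min (η₁ u) (η₂ u) ≤ 2 * p * max B₁ B₂ :=
      mul_le_mul_of_nonneg_left hm2 hc
    have hcm2 : -(2 * p * max B₁ B₂) ≤ 2 * p * min (η₁ u) (η₂ u) := by
      have := mul_le_mul_of_nonneg_left hm1 hc
      linarith
    rw [Real.norm_eq_abs, hgdef, abs_le]
    constructor <;> simp only [] <;> linarith
  -- pointwise bound
  have hpt : ∀ u, f u ≤ N ^ (2 * p) * g u := by
    intro u
    have hb : (1 + η₁ u) * S + (1 + η₂ u) * I ≤ (1 + max (η₁ u) (η₂ u)) * N := by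
      rw [hNdef, mul_add]
      exact add_le_add
        (mul_le_mul_of_nonneg_right (by linarith [le_max_left (η₁ u) (η₂ u)]) hS.le)
        (mul_le_mul_of_nonneg_right (by linarith [le_max_right (η₁ u) (η₂ u)]) hI.le)
    have h1' : ((1 + η₁ u) * S + (1 + η₂ u) * I) ^ (2 * p)
        ≤ ((1 + max (η₁ u) (η₂ u)) * N) ^ (2 * p) :=
      Real.rpow_le_rpow (hbase u).le hb (by linarith)
    rw [Real.mul_rpow (hMpos u).le hN.le] at h1'
    have h2' : min (η₁ u) (η₂ u) * N ≤ η₁ u * S + η₂ u * I := by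
      rw [hNdef, mul_add]
      exact add_le_add (mul_le_mul_of_nonneg_right (min_le_left _ _) hS.le)
        (mul_le_mul_of_nonneg_right (min_le_right _ _) hI.le)
    have hc : (0:ℝ) ≤ 2 * p * N ^ (2 * p - 1) := by positivity
    have hxm := mul_le_mul_of_nonneg_left h2' hc
    have heq : (1 + max (η₁ u) (η₂ u)) ^ (2 * p) * N ^ (2 * p) - N ^ (2 * p)
        - 2 * p * N ^ (2 * p - 1) * (min (η₁ u) (η₂ u) * N) = N ^ (2 * p) * g u := by
      rw [hgdef, ← e1]; ring
    rw [hfdef]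
    simp only []
    linarith [heq]
  -- integral bound
  have hint : (∫ u, f u ∂ν) ≤ N ^ (2 * p) * J := by
    calc (∫ u, f u ∂ν) ≤ ∫ u, N ^ (2 * p) * g u ∂ν :=
          integral_mono hfi (hgi.const_mul _) hpt
      _ = N ^ (2 * p) * J := by rw [integral_const_mul, hJdef]
  -- final algebra
  have hQ : 0 < N ^ (2 * p - 2) := Real.rpow_pos_of_pos hN _
  have hRHS : 2 * p * N ^ (2 * p - 2) * (A * N - χ * N ^ 2)
      = 2 * p * N ^ (2 * p - 2) * A * N - 2 * p * μ₁ * N ^ (2 * p - 2) * N ^ 2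
        + p * (2 * p - 1) * K * N ^ (2 * p - 2) * N ^ 2 + J * N ^ (2 * p - 2) * N ^ 2 := by
    rw [hχ]
    field_simp
    ring
  have hσ : σ₁ ^ 2 * S ^ 2 + σ₂ ^ 2 * I ^ 2 ≤ K * N ^ 2 := by
    have hN2 : N ^ 2 = S ^ 2 + 2 * S * I + I ^ 2 := by rw [hNdef]; ring
    have h1'' := le_max_left (σ₁ ^ 2) (σ₂ ^ 2)
    have h2'' := le_max_right (σ₁ ^ 2) (σ₂ ^ 2)
    rw [hN2]
    nlinarith [sq_nonneg S, sq_nonneg I, mul_pos hS hI]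
  have hσ' : p * (2 * p - 1) * N ^ (2 * p - 2) * (σ₁ ^ 2 * S ^ 2 + σ₂ ^ 2 * I ^ 2)
      ≤ p * (2 * p - 1) * N ^ (2 * p - 2) * (K * N ^ 2) :=
    mul_le_mul_of_nonneg_left hσ (by positivity)
  have hdrift : A - μ₁ * S - (μ₁ + α + γ) * I ≤ A - μ₁ * N := by
    have h0 : 0 ≤ (α + γ) * I := mul_nonneg (by linarith) hI.le
    rw [hNdef]; linarith
  have hdrift' : 2 * p * (N ^ (2 * p - 2) * N) * (A - μ₁ * S - (μ₁ + α + γ) * I)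
      ≤ 2 * p * (N ^ (2 * p - 2) * N) * (A - μ₁ * N) :=
    mul_le_mul_of_nonneg_left hdrift (by positivity)
  rw [e2] at hint
  rw [e1', hRHS]
  linarith only [hint, hdrift', hσ']
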